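/- Let f be a nonzero rational function (a quotient of two complex polynomials) such that 0 is neither a zero nor a pole of f and f has no zeros or poles on the unit circle C. Then ∑_ρ log^-|ρ| − ∑_ζ log^-|ζ| ≤ log ‖f‖_C − log |f(0)|, where ρ ranges over the zeros of f in the open unit disk and ζ over its poles in the open unit disk, each counted with multiplicity, and ‖f‖_C := sup_{|z|=1} |f(z)|. -/

import Mathlib

open MeasureTheory Polynomial

/-- The negative part of the logarithm: `log⁻(x) = -log(x)` for `0 < x < 1`, `0` otherwise. -/
noncomputable def logNeg (x : ℝ) : ℝ := max (-Real.log x) 0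

private lemma log_multiset_prod (s : Multiset ℝ) (h : ∀ x ∈ s, x ≠ 0) :
    Real.log s.prod = (s.map Real.log).sum := by
  induction s using Multiset.induction_on with
  | empty => simp
  | cons a s ih =>
    have ha : a ≠ 0 := h a (Multiset.mem_cons_self a s)
    have hs : ∀ x ∈ s, x ≠ 0 := fun x hx => h x (Multiset.mem_cons_of_mem hx)
    have hprod : s.prod ≠ 0 := fun h0 =>
      hs 0 (Multiset.prod_eq_zero_iff.mp h0) rfl
    rw [Multiset.prod_cons, Real.log_mul ha hprod, Multiset.map_cons,
      Multiset.sum_cons, ih hs]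

private lemma norm_mprod (s : Multiset ℂ) : ‖s.prod‖ = (s.map fun x => ‖x‖).prod :=
  map_multiset_prod (normHom (α := ℂ)) s

private lemma sum_logNeg_eq (p : Polynomial ℂ) :
    (p.roots.map fun ρ => logNeg (‖ρ‖)).sum =
      -((p.roots.filter fun a => ‖a‖ < 1).map
          fun a => Real.log (‖a‖)).sum := by
  classical
  conv_lhs => rw [← Multiset.filter_add_not (fun a => ‖a‖ < 1) p.roots]
  rw [Multiset.map_add, Multiset.sum_add]
  have h1 : ((p.roots.filter fun a => ‖a‖ < 1).map
      fun ρ => logNeg (‖ρ‖)).sum =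
      -((p.roots.filter fun a => ‖a‖ < 1).map
          fun a => Real.log (‖a‖)).sum := by
    rw [← Multiset.sum_map_neg', Multiset.map_map]
    refine congrArg Multiset.sum (Multiset.map_congr rfl fun a ha => ?_)
    have hlt : ‖a‖ < 1 := (Multiset.mem_filter.mp ha).2
    show logNeg _ = _
    unfold logNeg
    exact max_eq_left (neg_nonneg.mpr (Real.log_nonpos (norm_nonneg a) hlt.le))
  have h2 : ((p.roots.filter fun a => ¬ ‖a‖ < 1).map
      fun ρ => logNeg (‖ρ‖)).sum = 0 := by
    refine Multiset.sum_eq_zero fun x hx => ?_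
    obtain ⟨a, ha, rfl⟩ := Multiset.mem_map.mp hx
    have h1a : (1:ℝ) ≤ ‖a‖ := not_lt.mp (Multiset.mem_filter.mp ha).2
    exact max_eq_right (neg_nonpos.mpr (Real.log_nonneg h1a))
  rw [h1, h2, add_zero]

private lemma abs_circle_eq (z : ℂ) (hz : ‖z‖ = 1) (a : ℂ) :
    ‖1 - (starRingEnd ℂ) a * z‖ = ‖z - a‖ := by
  have hzz : z * (starRingEnd ℂ) z = 1 := by
    rw [Complex.mul_conj]
    norm_cast
    rw [Complex.normSq_eq_norm_sq, hz, one_pow]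
  have h1 : z * ((starRingEnd ℂ) z - (starRingEnd ℂ) a) = 1 - (starRingEnd ℂ) a * z := by
    rw [mul_sub, hzz]; ring
  rw [← h1, norm_mul, hz, one_mul, ← map_sub, Complex.norm_conj]

private lemma abs_eval_prod_refl (s : Multiset ℂ) (z : ℂ) (hz : ‖z‖ = 1) :
    ‖(s.map fun a => (1 : Polynomial ℂ) - C ((starRingEnd ℂ) a) * X).prod.eval z‖ =
    ‖(s.map fun a => (X : Polynomial ℂ) - C a).prod.eval z‖ := by
  rw [eval_multiset_prod, eval_multiset_prod, Multiset.map_map, Multiset.map_map,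
    norm_mprod, norm_mprod, Multiset.map_map, Multiset.map_map]
  refine congrArg Multiset.prod (Multiset.map_congr rfl fun a _ => ?_)
  simp only [Function.comp_apply, eval_sub, eval_one, eval_mul, eval_C, eval_X]
  exact abs_circle_eq z hz a

/-- **One-sided Jensen inequality on the unit disk for rational functions.**
Let `f = p/q` be a nonzero rational function (with `p, q` coprime polynomials) such that `0`
is neither a zero nor a pole of `f`, and `f` has no zeros or poles on the unit circle. Then
`∑_ρ log⁻|ρ| − ∑_ζ log⁻|ζ| ≤ log ‖f‖_C − log |f(0)|`, where `ρ` (resp. `ζ`) ranges over the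
zeros (resp. poles) of `f` in the open unit disk, counted with multiplicity. (Recall that
`log⁻|w| = 0` whenever `|w| ≥ 1`, so the sums may equivalently range over all the roots of
`p` and `q`.) -/
theorem jensen_one_sided_rational
    (p q : Polynomial ℂ) (hp : p ≠ 0) (hq : q ≠ 0) (hcop : IsCoprime p q)
    (h0z : p.eval 0 ≠ 0) (h0p : q.eval 0 ≠ 0)
    (hcirc : ∀ z : ℂ, ‖z‖ = 1 → p.eval z ≠ 0 ∧ q.eval z ≠ 0) :
    (p.roots.map fun ρ => logNeg (‖ρ‖)).sum -
        (q.roots.map fun ζ => logNeg (‖ζ‖)).sum ≤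
      Real.log (⨆ z ∈ Metric.sphere (0 : ℂ) 1,
          ‖p.eval z / q.eval z‖) -
        Real.log (‖p.eval 0 / q.eval 0‖) := by
  classical
  set M := ⨆ z ∈ Metric.sphere (0 : ℂ) 1, ‖p.eval z / q.eval z‖ with hM
  set S := p.roots.filter (fun a => ‖a‖ < 1) with hSdef
  set T := q.roots.filter (fun a => ‖a‖ < 1) with hTdef
  -- factorizations
  obtain ⟨p₁, hpfac⟩ : ((S.map fun a => (X : Polynomial ℂ) - C a).prod) ∣ p :=
    (Multiset.prod_dvd_prod_of_le (Multiset.map_le_map (Multiset.filter_le _ _))).trans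
      p.prod_multiset_X_sub_C_dvd
  obtain ⟨q₁, hqfac⟩ : ((T.map fun a => (X : Polynomial ℂ) - C a).prod) ∣ q :=
    (Multiset.prod_dvd_prod_of_le (Multiset.map_le_map (Multiset.filter_le _ _))).trans
      q.prod_multiset_X_sub_C_dvd
  -- roots in S, T are nonzero and inside the disk
  have hSmem : ∀ a ∈ S, a ≠ 0 ∧ ‖a‖ < 1 := by
    intro a ha
    obtain ⟨har, hlt⟩ := Multiset.mem_filter.mp ha
    refine ⟨fun h0 => h0z ?_, hlt⟩
    have hr := isRoot_of_mem_roots har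
    rwa [h0] at hr
  have hTmem : ∀ a ∈ T, a ≠ 0 ∧ ‖a‖ < 1 := by
    intro a ha
    obtain ⟨har, hlt⟩ := Multiset.mem_filter.mp ha
    refine ⟨fun h0 => h0p ?_, hlt⟩
    have hr := isRoot_of_mem_roots har
    rwa [h0] at hr
  -- evaluations at 0 are nonzero
  have hp0split : p.eval 0 = ((S.map fun a => (X : Polynomial ℂ) - C a).prod).eval 0 * p₁.eval 0 := by
    rw [hpfac, eval_mul]
  have hq0split : q.eval 0 = ((T.map fun a => (X : Polynomial ℂ) - C a).prod).eval 0 * q₁.eval 0 := by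
    rw [hqfac, eval_mul]
  have hpA0 : ((S.map fun a => (X : Polynomial ℂ) - C a).prod).eval 0 ≠ 0 :=
    (mul_ne_zero_iff.mp (hp0split ▸ h0z)).1
  have hp₁0 : p₁.eval 0 ≠ 0 := (mul_ne_zero_iff.mp (hp0split ▸ h0z)).2
  have hqB0 : ((T.map fun a => (X : Polynomial ℂ) - C a).prod).eval 0 ≠ 0 :=
    (mul_ne_zero_iff.mp (hq0split ▸ h0p)).1
  have hq₁0 : q₁.eval 0 ≠ 0 := (mul_ne_zero_iff.mp (hq0split ▸ h0p)).2
  have hq₁ne : q₁ ≠ 0 := fun h => hq₁0 (by rw [h, eval_zero])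
  -- q₁ has no zero in the closed unit disk
  have hq₁_ne : ∀ z : ℂ, ‖z‖ ≤ 1 → q₁.eval z ≠ 0 := by
    intro z hz hz0
    have hqz : q.eval z = 0 := by rw [hqfac, eval_mul, hz0, mul_zero]
    rcases lt_or_eq_of_le hz with hlt | heq
    · have hzroot : z ∈ q₁.roots := by
        rw [mem_roots hq₁ne]; exact hz0
      have hcount : Multiset.count z q.roots
          = Multiset.count z T + Multiset.count z q₁.roots := by
        conv_lhs => rw [hqfac]
        rw [roots_mul (hqfac ▸ hq), roots_multiset_prod_X_sub_C, Multiset.count_add]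
      have hcT : Multiset.count z T = Multiset.count z q.roots := by
        rw [hTdef, Multiset.count_filter, if_pos hlt]
      have : Multiset.count z q₁.roots = 0 := by omega
      exact (Multiset.count_eq_zero.mp this) hzroot
    · exact (hcirc z heq).2 hqz
  -- the Blaschke-modified function
  set P1 := p₁ * (S.map fun a => (1 : Polynomial ℂ) - C ((starRingEnd ℂ) a) * X).prod with hP1
  set Q1 := q₁ * (T.map fun a => (1 : Polynomial ℂ) - C ((starRingEnd ℂ) a) * X).prod with hQ1
  set g : ℂ → ℂ := fun z => P1.eval z / Q1.eval z with hg
  -- the denominator does not vanish on the closed disk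
  have hQ1ne : ∀ z : ℂ, ‖z‖ ≤ 1 → Q1.eval z ≠ 0 := by
    intro z hz
    rw [hQ1, eval_mul]
    refine mul_ne_zero (hq₁_ne z hz) ?_
    rw [eval_multiset_prod, Multiset.map_map]
    rw [Ne, Multiset.prod_eq_zero_iff]
    intro h0
    obtain ⟨a, ha, h0'⟩ := Multiset.mem_map.mp h0
    simp only [Function.comp_apply, eval_sub, eval_one, eval_mul, eval_C, eval_X] at h0'
    have h1 : (1 : ℂ) = (starRingEnd ℂ) a * z := sub_eq_zero.mp h0'
    have : ‖(starRingEnd ℂ) a * z‖ < 1 := by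
      rw [norm_mul, Complex.norm_conj]
      calc ‖a‖ * ‖z‖ ≤ ‖a‖ * 1 :=
            mul_le_mul_of_nonneg_left hz (norm_nonneg a)
        _ < 1 := by rw [mul_one]; exact (hTmem a ha).2
    rw [← h1] at this
    simp at this
  -- differentiability
  have hdiff : DiffContOnCl ℂ g (Metric.ball (0 : ℂ) 1) := by
    apply DifferentiableOn.diffContOnCl
    rw [closure_ball (0 : ℂ) one_ne_zero]
    refine DifferentiableOn.div P1.differentiable.differentiableOn
      Q1.differentiable.differentiableOn fun z hz => hQ1ne z ?_
    rw [Metric.mem_closedBall, dist_zero_right] at hz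
    exact hz
  -- the boundary values of g agree in absolute value with those of p/q
  have habs_bd : ∀ z : ℂ, ‖z‖ = 1 →
      ‖g z‖ = ‖p.eval z / q.eval z‖ := by
    intro z hz1
    have hP : ‖P1.eval z‖ = ‖p.eval z‖ := by
      rw [hP1, hpfac, eval_mul, eval_mul, norm_mul, norm_mul,
        abs_eval_prod_refl S z hz1, mul_comm]
    have hQ : ‖Q1.eval z‖ = ‖q.eval z‖ := by
      rw [hQ1, hqfac, eval_mul, eval_mul, norm_mul, norm_mul,
        abs_eval_prod_refl T z hz1, mul_comm]
    rw [hg, norm_div, norm_div, hP, hQ]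
  -- the sup is an upper bound on the sphere
  have hbdd : BddAbove (Set.range fun z =>
      ⨆ _ : z ∈ Metric.sphere (0 : ℂ) 1, ‖p.eval z / q.eval z‖) := by
    have hFcont : ContinuousOn (fun z => ‖p.eval z / q.eval z‖)
        (Metric.sphere (0 : ℂ) 1) := by
      refine continuous_norm.comp_continuousOn ?_
      refine ContinuousOn.div p.continuous.continuousOn q.continuous.continuousOn
        fun z hz => ?_
      rw [mem_sphere_zero_iff_norm] at hz
      exact (hcirc z hz).2
    obtain ⟨K, hK⟩ := ((isCompact_sphere (0 : ℂ) 1).image_of_continuousOn hFcont).bddAbove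
    refine ⟨max K 0, ?_⟩
    rintro y ⟨z, rfl⟩
    dsimp only
    by_cases hzs : z ∈ Metric.sphere (0 : ℂ) 1
    · rw [ciSup_pos hzs]
      exact le_max_of_le_left (hK (Set.mem_image_of_mem _ hzs))
    · rw [ciSup_neg hzs, Real.sSup_empty]
      exact le_max_right _ _
  have hFM : ∀ z ∈ Metric.sphere (0 : ℂ) 1,
      ‖p.eval z / q.eval z‖ ≤ M := by
    intro z hz
    calc ‖p.eval z / q.eval z‖
        = ⨆ _ : z ∈ Metric.sphere (0 : ℂ) 1, ‖p.eval z / q.eval z‖ :=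
          (ciSup_pos (f := fun _ : z ∈ Metric.sphere (0:ℂ) 1 => ‖p.eval z / q.eval z‖) hz).symm
      _ ≤ M := le_ciSup hbdd z
  -- maximum modulus principle
  have hg0le : ‖g 0‖ ≤ M := by
    refine Complex.norm_le_of_forall_mem_frontier_norm_le Metric.isBounded_ball hdiff
      (fun z hz => ?_) (subset_closure (Metric.mem_ball_self one_pos))
    rw [frontier_ball _ one_ne_zero] at hz
    have hz1 : ‖z‖ = 1 := by
      rwa [mem_sphere_zero_iff_norm] at hz
    rw [habs_bd z hz1]
    exact hFM z hz
  -- value of g at 0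
  have hg0 : g 0 = p₁.eval 0 / q₁.eval 0 := by
    have hone : ∀ s : Multiset ℂ,
        ((s.map fun a => (1 : Polynomial ℂ) - C ((starRingEnd ℂ) a) * X).prod).eval 0 = 1 := by
      intro s
      rw [eval_multiset_prod, Multiset.map_map]
      refine Multiset.prod_eq_one fun x hx => ?_
      obtain ⟨a, _, rfl⟩ := Multiset.mem_map.mp hx
      simp
    show P1.eval 0 / Q1.eval 0 = _
    rw [hP1, hQ1, eval_mul, eval_mul, hone S, hone T, mul_one, mul_one]
  -- log computations at 0
  have hlogprod : ∀ s : Multiset ℂ, (∀ a ∈ s, a ≠ 0 ∧ ‖a‖ < 1) →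
      Real.log (‖((s.map fun a => (X : Polynomial ℂ) - C a).prod).eval 0‖) =
        (s.map fun a => Real.log (‖a‖)).sum := by
    intro s hs
    rw [eval_multiset_prod, Multiset.map_map, norm_mprod, Multiset.map_map]
    rw [log_multiset_prod]
    · rw [Multiset.map_map]
      refine congrArg Multiset.sum (Multiset.map_congr rfl fun a ha => ?_)
      simp
    · intro x hx
      obtain ⟨a, ha, rfl⟩ := Multiset.mem_map.mp hx
      simp only [Function.comp_apply, eval_sub, eval_X, eval_C, zero_sub, norm_neg]
      exact norm_ne_zero_iff.mpr (hs a ha).1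
  have hlogp : Real.log (‖p.eval 0‖) =
      (S.map fun a => Real.log (‖a‖)).sum + Real.log (‖p₁.eval 0‖) := by
    rw [hp0split, norm_mul, Real.log_mul (norm_ne_zero_iff.mpr hpA0) (norm_ne_zero_iff.mpr hp₁0),
      hlogprod S hSmem]
  have hlogq : Real.log (‖q.eval 0‖) =
      (T.map fun a => Real.log (‖a‖)).sum + Real.log (‖q₁.eval 0‖) := by
    rw [hq0split, norm_mul, Real.log_mul (norm_ne_zero_iff.mpr hqB0) (norm_ne_zero_iff.mpr hq₁0),
      hlogprod T hTmem]
  -- log of g at 0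
  have hg0pos : 0 < ‖g 0‖ := by
    rw [hg0]
    exact norm_pos_iff.mpr (div_ne_zero hp₁0 hq₁0)
  have hlogg : Real.log (‖g 0‖) =
      Real.log (‖p₁.eval 0‖) - Real.log (‖q₁.eval 0‖) := by
    rw [hg0, norm_div, Real.log_div (norm_ne_zero_iff.mpr hp₁0) (norm_ne_zero_iff.mpr hq₁0)]
  have hkey : Real.log (‖g 0‖) ≤ Real.log M := Real.log_le_log hg0pos hg0le
  -- final arithmetic
  rw [sum_logNeg_eq p, sum_logNeg_eq q, ← hSdef, ← hTdef, norm_div,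
    Real.log_div (norm_ne_zero_iff.mpr h0z) (norm_ne_zero_iff.mpr h0p)]
  have hlogg2 := hlogg
  rw [hlogp, hlogq] at *
  linarith [hkey, hlogg]
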